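/- If range(id − σ) = ker(id + τ), σ is bijective, and every eigenvalue of σ other than 1 is negative, then the quadratic form of σ is strictly negative on ker(id + τ): for every nonzero x ∈ ker(id + τ), the inner product ⟨x, σx⟩ is a negative real number. -/

import Mathlib

/-- if `range (id − σ) = ker (id + τ)`, `σ` is bijective, and every eigenvalue
of `σ` other than `1` is negative, then the quadratic form of `σ` is strictly negative on
`ker (id + τ)`: for every nonzero `x ∈ ker (id + τ)`, `⟨x, σ x⟩` is a negative real number. -/
theorem sigma_strictly_negative_on_ker
    {W : Type*} [NormedAddCommGroup W] [InnerProductSpace ℂ W] [FiniteDimensional ℂ W]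
    (σ τ : W →ₗ[ℂ] W) (hσ : σ.IsSymmetric) (hτ : τ.IsSymmetric)
    (h : LinearMap.range (LinearMap.id - σ) = LinearMap.ker (LinearMap.id + τ))
    (hbij : Function.Bijective σ)
    (heig : ∀ μ : ℂ, Module.End.HasEigenvalue σ μ → μ ≠ 1 → ∃ r : ℝ, (μ = (r : ℂ)) ∧ r < 0) :
    ∀ x ∈ LinearMap.ker (LinearMap.id + τ), x ≠ 0 →
      ∃ r : ℝ, ((inner ℂ x (σ x) : ℂ) = (r : ℂ)) ∧ r < 0 := by
  intro x hx hx0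
  -- x belongs to range (id - σ)
  rw [← h] at hx
  obtain ⟨z, hz⟩ := hx
  -- x is orthogonal to ker (id - σ)
  have hperp : ∀ y, ((LinearMap.id - σ : W →ₗ[ℂ] W)) y = 0 → (inner ℂ y x : ℂ) = 0 := by
    intro y hy
    have hsym : ((LinearMap.id : W →ₗ[ℂ] W) - σ).IsSymmetric := by
      intro a b
      simp only [LinearMap.sub_apply, LinearMap.id_apply, inner_sub_left, inner_sub_right,
        hσ a b]
    calc (inner ℂ y x : ℂ) = inner ℂ y (((LinearMap.id - σ : W →ₗ[ℂ] W)) z) := by rw [hz]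
      _ = inner ℂ (((LinearMap.id - σ : W →ₗ[ℂ] W)) y) z := (hsym y z).symm
      _ = 0 := by rw [hy, inner_zero_left]
  -- spectral theorem
  set n := Module.finrank ℂ W with hn
  have hrank : Module.finrank ℂ W = n := rfl
  set b := hσ.eigenvectorBasis hrank with hb
  set μ := hσ.eigenvalues hrank with hμ
  -- each eigenvalue is 1 or negative
  have key : ∀ i : Fin n, μ i = 1 ∨ μ i < 0 := by
    intro i
    by_cases h1 : (μ i : ℂ) = 1
    · left; exact_mod_cast h1
    · right
      obtain ⟨r, hr, hr0⟩ := heig (μ i) (hσ.hasEigenvalue_eigenvalues hrank i) h1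
      have : (μ i : ℝ) = r := by exact_mod_cast hr
      rw [this]; exact hr0
  -- if μ i = 1 then b.repr x i = 0
  have hcoef : ∀ i : Fin n, μ i = 1 → b.repr x i = 0 := by
    intro i hi
    rw [b.repr_apply_apply]
    apply hperp
    rw [LinearMap.sub_apply, LinearMap.id_apply]
    have := hσ.apply_eigenvectorBasis hrank i
    rw [← hb, ← hμ] at this
    rw [this, hi]
    simp
  -- inner ℂ x (σ x) = Σ μ i * ‖b.repr x i‖²
  have hform : (inner ℂ x (σ x) : ℂ) = ∑ i : Fin n, ((μ i : ℂ) * (‖b.repr x i‖ ^ 2 : ℝ)) := by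
    rw [← b.sum_inner_mul_inner x (σ x)]
    congr 1
    ext i
    have h1 : (inner ℂ (b i) (σ x) : ℂ) = (μ i : ℂ) * inner ℂ (b i) x := by
      rw [← hσ (b i) x, hσ.apply_eigenvectorBasis hrank i, inner_smul_left]
      simp [← hb, ← hμ, Complex.conj_ofReal]
    have h2 : (inner ℂ x (b i) : ℂ) * inner ℂ (b i) x = (‖b.repr x i‖ ^ 2 : ℝ) := by
      rw [b.repr_apply_apply, ← inner_conj_symm x (b i), RCLike.conj_mul]
      norm_cast
    rw [h1, ← mul_assoc, mul_comm (inner ℂ x (b i) : ℂ) ((μ i : ℂ)), mul_assoc, h2]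
  refine ⟨∑ i : Fin n, μ i * ‖b.repr x i‖ ^ 2, by rw [hform]; push_cast; ring, ?_⟩
  -- strict negativity
  have hex : ∃ i, b.repr x i ≠ 0 := by
    by_contra hc
    push_neg at hc
    apply hx0
    have : b.repr x = 0 := by ext i; exact hc i
    simpa using congrArg b.repr.symm this
  obtain ⟨i, hi⟩ := hex
  have hμi : μ i < 0 := by
    rcases key i with h1 | h1
    · exact absurd (hcoef i h1) hi
    · exact h1
  apply Finset.sum_neg'
  · intro j _
    rcases key j with h1 | h1
    · simp [hcoef j h1]
    · apply mul_nonpos_of_nonpos_of_nonneg h1.le (by positivity)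
  · exact ⟨i, Finset.mem_univ i, mul_neg_of_neg_of_pos hμi (pow_pos (norm_pos_iff.mpr hi) 2)⟩
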